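/- For δ ∈ (0, 1/2), let P_δ be defined on [0,1] by P_δ(z) = 2 for z ∈ [0, 1/2], P_δ(z) = 1/(1−z) for z ∈ (1/2, 1−δ], and P_δ(z) = (z − 1 + δ)/δ² + 1/δ for z ∈ (1−δ, 1], and let G_δ(z) = ∫₀^z P_δ(u) du. Let x*_δ = δ − δ². Then for every M > 0 there exists δ ∈ (0, 1/2) such that G_δ(1)/2 − (G_δ(1 − x*_δ) + G_δ(x*_δ))/2 > 0 and G_δ(1)/2 − G_δ(1/2) > M · (G_δ(1)/2 − (G_δ(1 − x*_δ) + G_δ(x*_δ))/2). In particular, the Price of Anarchy is unbounded over convex price functions even for this step demand. -/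

import Mathlib

open intervalIntegral MeasureTheory

/-- The convex price function used to show unbounded Price of Anarchy:
`P_δ(z) = 2` on `[0,1/2]`, `1/(1−z)` on `(1/2, 1−δ]`, and
`(z−1+δ)/δ² + 1/δ` on `(1−δ, 1]`. -/
noncomputable def Pdelta (δ : ℝ) : ℝ → ℝ := fun z =>
  if z ≤ 1 / 2 then 2
  else if z ≤ 1 - δ then 1 / (1 - z)
  else (z - 1 + δ) / δ ^ 2 + 1 / δ

/-- Generation cost `G_δ(z) = ∫₀^z P_δ(u) du`. -/
noncomputable def Gdelta (δ : ℝ) (z : ℝ) : ℝ := ∫ u in (0:ℝ)..z, Pdelta δ u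

lemma ii_congr {f g : ℝ → ℝ} {a b : ℝ} (h : Set.EqOn g f (Set.uIcc a b))
    (hg : IntervalIntegrable g volume a b) : IntervalIntegrable f volume a b :=
  hg.congr fun x hx => h (Set.uIoc_subset_uIcc hx)

-- EqOn lemmas
lemma eqOn_left (δ a : ℝ) (ha : a ≤ 1/2) (ha0 : 0 ≤ a) :
    Set.EqOn (Pdelta δ) (fun _ => (2:ℝ)) (Set.uIcc 0 a) := by
  intro z hz
  rw [Set.uIcc_of_le ha0] at hz
  simp only [Pdelta, if_pos (le_trans hz.2 ha)]

lemma eqOn_mid (δ : ℝ) (hδ0 : 0 < δ) (hδ : δ < 1/2) :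
    Set.EqOn (Pdelta δ) (fun z => (1 - z)⁻¹) (Set.uIcc (1/2) (1-δ)) := by
  intro z hz
  rw [Set.uIcc_of_le (by linarith)] at hz
  obtain ⟨h1, h2⟩ := hz
  simp only [Pdelta]
  split_ifs with hA
  · have : z = 1/2 := le_antisymm hA h1
    norm_num [this]
  · rw [one_div]

lemma eqOn_right (δ t : ℝ) (hδ0 : 0 < δ) (hδ : δ < 1/2) (ht1 : 1 - δ ≤ t) :
    Set.EqOn (Pdelta δ) (fun z => (z - 1 + δ) / δ ^ 2 + 1 / δ) (Set.uIcc (1-δ) t) := by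
  intro z hz
  rw [Set.uIcc_of_le ht1] at hz
  obtain ⟨h1, h2⟩ := hz
  simp only [Pdelta]
  split_ifs with hA hB
  · linarith
  · have hz' : z = 1 - δ := le_antisymm hB h1
    rw [hz']
    field_simp
    rw [sub_sub_cancel, pow_two, mul_div_assoc, div_self hδ0.ne']; ring
  · rfl

lemma G_left (δ a : ℝ) (ha0 : 0 ≤ a) (ha : a ≤ 1/2) : Gdelta δ a = 2 * a := by
  rw [Gdelta, intervalIntegral.integral_congr (eqOn_left δ a ha ha0),
    intervalIntegral.integral_const]
  simp [mul_comm]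

lemma mid_int (δ : ℝ) (hδ0 : 0 < δ) (hδ : δ < 1/2) :
    ∫ u in (1/2:ℝ)..(1-δ), Pdelta δ u = Real.log (1/(2*δ)) := by
  rw [intervalIntegral.integral_congr (eqOn_mid δ hδ0 hδ)]
  have h1 : ∫ u in (1/2:ℝ)..(1-δ), (1 - u)⁻¹
      = ∫ x in (1 - (1-δ))..(1 - 1/2), x⁻¹ :=
    intervalIntegral.integral_comp_sub_left (fun x => x⁻¹) 1
  rw [h1, show (1:ℝ) - (1-δ) = δ by ring, show (1:ℝ) - 1/2 = 1/2 by norm_num,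
    integral_inv (by rw [Set.uIcc_of_le (by linarith)]; intro h; exact absurd h.1 (by linarith))]
  rw [div_div]

lemma right_int (δ t : ℝ) (hδ0 : 0 < δ) (hδ : δ < 1/2) (ht1 : 1 - δ ≤ t) :
    ∫ u in (1-δ:ℝ)..t, Pdelta δ u
      = (t - (1-δ))^2 / (2*δ^2) + (t - (1-δ))/δ := by
  rw [intervalIntegral.integral_congr (eqOn_right δ t hδ0 hδ ht1)]
  have key : ∫ u in (1-δ:ℝ)..t, ((u - 1 + δ) / δ ^ 2 + 1 / δ)
      = ((t - (1-δ))^2/(2*δ^2) + t/δ) - (((1-δ) - (1-δ))^2/(2*δ^2) + (1-δ)/δ) := by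
    apply intervalIntegral.integral_eq_sub_of_hasDerivAt
      (f := fun z => (z - (1-δ))^2/(2*δ^2) + z/δ)
    · intro x _
      have h := ((((hasDerivAt_id x).sub_const (1-δ)).pow 2).div_const (2*δ^2)).add
        ((hasDerivAt_id x).div_const δ)
      convert h using 1
      · rfl
      · simp only [id]; push_cast; field_simp; ring
    · exact (by fun_prop : Continuous fun u : ℝ => (u - 1 + δ) / δ ^ 2 + 1 / δ).intervalIntegrable _ _
  rw [key]
  field_simp
  ring

lemma G_val (δ t : ℝ) (hδ0 : 0 < δ) (hδ : δ < 1/2) (ht1 : 1 - δ ≤ t) :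
    Gdelta δ t = 1 + Real.log (1/(2*δ))
      + ((t - (1-δ))^2 / (2*δ^2) + (t - (1-δ))/δ) := by
  have hA : IntervalIntegrable (Pdelta δ) volume 0 (1/2) :=
    ii_congr (fun z hz => (eqOn_left δ (1/2) le_rfl (by norm_num) hz).symm)
      (intervalIntegrable_const)
  have hB : IntervalIntegrable (Pdelta δ) volume (1/2) (1-δ) := by
    refine ii_congr (fun z hz => (eqOn_mid δ hδ0 hδ hz).symm) ?_
    apply ContinuousOn.intervalIntegrable
    apply ContinuousOn.inv₀ (by fun_prop)
    intro x hx
    rw [Set.uIcc_of_le (by linarith)] at hx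
    have := hx.2; intro h; linarith [sub_eq_zero.mp h]
  have hC : IntervalIntegrable (Pdelta δ) volume (1-δ) t :=
    ii_congr (fun z hz => (eqOn_right δ t hδ0 hδ ht1 hz).symm)
      ((by fun_prop : Continuous fun u : ℝ => (u - 1 + δ) / δ ^ 2 + 1 / δ).intervalIntegrable _ _)
  rw [Gdelta, ← intervalIntegral.integral_add_adjacent_intervals (hA.trans hB) hC,
    ← intervalIntegral.integral_add_adjacent_intervals hA hB,
    right_int δ t hδ0 hδ ht1, mid_int δ hδ0 hδ]
  have := G_left δ (1/2) (by norm_num) le_rfl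
  rw [Gdelta] at this
  rw [this]; ring

/-- Unbounded Price of Anarchy for convex price functions with step demand:
for every `M > 0` there is `δ ∈ (0, 1/2)` such that, with `x*_δ = δ − δ²`
(the profit-maximizing shift), the decentralized welfare improvement
`G_δ(1)/2 − (G_δ(1−x*) + G_δ(x*))/2` is positive and the centralized welfare
improvement `G_δ(1)/2 − G_δ(1/2)` exceeds `M` times it. -/
theorem stmt5 (M : ℝ) (hM : 0 < M) :
    ∃ δ ∈ Set.Ioo (0 : ℝ) (1 / 2),
      0 < Gdelta δ 1 / 2 -
          (Gdelta δ (1 - (δ - δ ^ 2)) + Gdelta δ (δ - δ ^ 2)) / 2 ∧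
      Gdelta δ 1 / 2 - Gdelta δ (1 / 2) >
        M * (Gdelta δ 1 / 2 -
          (Gdelta δ (1 - (δ - δ ^ 2)) + Gdelta δ (δ - δ ^ 2)) / 2) := by
  set δ : ℝ := Real.exp (-(3*M/2+1)) / 2 with hδdef
  have hexp : (0:ℝ) < Real.exp (-(3*M/2+1)) := Real.exp_pos _
  have hlt1 : Real.exp (-(3*M/2+1)) < 1 := by
    rw [Real.exp_lt_one_iff]; linarith
  have hδ0 : 0 < δ := by positivity
  have hδ : δ < 1/2 := by rw [hδdef]; linarith
  have hδne : δ ≠ 0 := ne_of_gt hδ0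
  have hL : Real.log (1/(2*δ)) = 3*M/2 + 1 := by
    rw [hδdef, show 1/(2*(Real.exp (-(3*M/2+1))/2)) = (Real.exp (-(3*M/2+1)))⁻¹ by
      field_simp, ← Real.exp_neg, neg_neg, Real.log_exp]
  have e1 : Gdelta δ 1 = 1 + (3*M/2+1) + 3/2 := by
    rw [G_val δ 1 hδ0 hδ (by linarith), hL]
    field_simp; ring
  have e2 : Gdelta δ (1-(δ-δ^2)) = 1 + (3*M/2+1) + (δ^2/2 + δ) := by
    rw [G_val δ (1-(δ-δ^2)) hδ0 hδ (by nlinarith), hL]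
    field_simp; ring
  have e3 : Gdelta δ (δ-δ^2) = 2*(δ-δ^2) :=
    G_left δ (δ-δ^2) (by nlinarith) (by nlinarith)
  have e4 : Gdelta δ (1/2) = 1 := by
    rw [G_left δ (1/2) (by norm_num) le_rfl]; norm_num
  refine ⟨δ, ⟨hδ0, hδ⟩, ?_, ?_⟩
  · rw [e1, e2, e3]; nlinarith [sq_nonneg (1-δ)]
  · rw [e1, e2, e3, e4]
    nlinarith [mul_pos (mul_pos hM hδ0) (by linarith : (0:ℝ) < 1/2 - δ)]
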